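/- Let f : ℝⁿ → ℝ be differentiable with L-Lipschitz-continuous gradient, ψ : ℝⁿ → ℝ ∪ {+∞} convex, proper, and closed, F = f + ψ, and suppose Q(d) = ∇f(x)ᵀd + (1/2)dᵀHd + ψ(x+d) − ψ(x) is σ-strongly convex for some σ > 0. Let m be the smallest eigenvalue of the symmetric matrix H and let γ ∈ (0,1], η ∈ [0,1). If d satisfies Q(d) ≤ (1 − η)Q* and the condition (1 − γ)·((1 − √η)/(1 + √η))·σ + m ≥ L holds, then the sufficient decrease condition F(x) − F(x + d) ≥ −γ·Q(d) ≥ 0 is satisfied. -/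

import Mathlib

/-
Setting: minimize F = f + ψ over ℝⁿ (modeled as `EuclideanSpace ℝ (Fin n)`), where
f : ℝⁿ → ℝ is smooth and ψ : ℝⁿ → ℝ ∪ {+∞} (modeled as `EReal`-valued, never ⊥)
is convex, proper and closed.  The quadratic model at x with symmetric operator H is
Q(d) = ⟪∇f(x), d⟫ + (1/2)⟪H d, d⟫ + ψ(x+d) − ψ(x), and Δ(d) = ⟪∇f(x), d⟫ + ψ(x+d) − ψ(x).
-/

open scoped RealInnerProductSpace
open Set Filter Topology

noncomputable section

/-- Convexity for extended-real-valued functions (values in ℝ ∪ {±∞}). -/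
def ConvexE {n : ℕ} (g : EuclideanSpace ℝ (Fin n) → EReal) : Prop :=
  ∀ x y : EuclideanSpace ℝ (Fin n), ∀ a b : ℝ, 0 ≤ a → 0 ≤ b → a + b = 1 →
    g (a • x + b • y) ≤ (a : EReal) * g x + (b : EReal) * g y

/-- ψ is proper: it never takes the value −∞ (its values lie in ℝ ∪ {+∞})
and it is finite somewhere. -/
def ProperPsi {n : ℕ} (ψ : EuclideanSpace ℝ (Fin n) → EReal) : Prop :=
  (∀ x, ψ x ≠ ⊥) ∧ ∃ x, ψ x ≠ ⊤

/-- ψ is closed, i.e. lower semicontinuous. -/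
def ClosedPsi {n : ℕ} (ψ : EuclideanSpace ℝ (Fin n) → EReal) : Prop :=
  LowerSemicontinuous ψ

/-- H is a symmetric (self-adjoint) linear operator. -/
def SymmCLM {n : ℕ} (H : EuclideanSpace ℝ (Fin n) →L[ℝ] EuclideanSpace ℝ (Fin n)) : Prop :=
  ∀ u v, ⟪H u, v⟫ = ⟪u, H v⟫

/-- m is the smallest eigenvalue of the symmetric operator H
(characterized as the minimum of the Rayleigh quotient over the unit sphere). -/
def IsSmallestEigenvalue {n : ℕ} (H : EuclideanSpace ℝ (Fin n) →L[ℝ] EuclideanSpace ℝ (Fin n))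
    (m : ℝ) : Prop :=
  IsLeast {r : ℝ | ∃ u : EuclideanSpace ℝ (Fin n), ‖u‖ = 1 ∧ r = ⟪H u, u⟫} m

/-- The objective F = f + ψ (extended-real-valued). -/
def Fm {n : ℕ} (f : EuclideanSpace ℝ (Fin n) → ℝ) (ψ : EuclideanSpace ℝ (Fin n) → EReal)
    (x : EuclideanSpace ℝ (Fin n)) : EReal :=
  (f x : EReal) + ψ x

/-- The quadratic model Q(d) = ∇f(x)ᵀd + (1/2)dᵀHd + ψ(x+d) − ψ(x). -/
def Qm {n : ℕ} (f : EuclideanSpace ℝ (Fin n) → ℝ) (ψ : EuclideanSpace ℝ (Fin n) → EReal)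
    (H : EuclideanSpace ℝ (Fin n) →L[ℝ] EuclideanSpace ℝ (Fin n))
    (x d : EuclideanSpace ℝ (Fin n)) : EReal :=
  ((⟪gradient f x, d⟫ + 1 / 2 * ⟪H d, d⟫ : ℝ) : EReal) + ψ (x + d) - ψ x

/-- Δ(d) = ∇f(x)ᵀd + ψ(x+d) − ψ(x). -/
def Dm {n : ℕ} (f : EuclideanSpace ℝ (Fin n) → ℝ) (ψ : EuclideanSpace ℝ (Fin n) → EReal)
    (x d : EuclideanSpace ℝ (Fin n)) : EReal :=
  ((⟪gradient f x, d⟫ : ℝ) : EReal) + ψ (x + d) - ψ x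

/-- g is σ-strongly convex: g − (σ/2)‖·‖² is convex. -/
def StrongConvexE {n : ℕ} (σ : ℝ) (g : EuclideanSpace ℝ (Fin n) → EReal) : Prop :=
  ConvexE (fun d => g d - ((σ / 2 * ‖d‖ ^ 2 : ℝ) : EReal))

/-- The solution set Ω = argmin F. -/
def SolSet {n : ℕ} (f : EuclideanSpace ℝ (Fin n) → ℝ)
    (ψ : EuclideanSpace ℝ (Fin n) → EReal) : Set (EuclideanSpace ℝ (Fin n)) :=
  {y | ∀ z, Fm f ψ y ≤ Fm f ψ z}

lemma descent {n : ℕ} (f : EuclideanSpace ℝ (Fin n) → ℝ) (L : ℝ)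
    (hf : Differentiable ℝ f)
    (hlip : ∀ y z, ‖gradient f y - gradient f z‖ ≤ L * ‖y - z‖)
    (x d : EuclideanSpace ℝ (Fin n)) :
    f (x + d) ≤ f x + ⟪gradient f x, d⟫ + L / 2 * ‖d‖ ^ 2 := by
  set g := gradient f x with hg
  set φ : ℝ → ℝ := fun t => f (x + t • d) - t * ⟪g, d⟫ - L / 2 * t ^ 2 * ‖d‖ ^ 2 with hφ
  have hline : ∀ t : ℝ, HasDerivAt (fun t : ℝ => x + t • d) d t := by
    intro t
    simpa using ((hasDerivAt_id t).smul_const d).const_add x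
  have hcomp : ∀ t : ℝ, HasDerivAt (fun t : ℝ => f (x + t • d)) ⟪gradient f (x + t • d), d⟫ t := by
    intro t
    have h1 := ((hf (x + t • d)).hasGradientAt.hasFDerivAt).comp_hasDerivAt t (hline t)
    exact h1.congr_deriv InnerProductSpace.toDual_apply_apply
  have hder : ∀ t : ℝ, HasDerivAt φ (⟪gradient f (x + t • d), d⟫ - ⟪g, d⟫ - L * t * ‖d‖ ^ 2) t := by
    intro t
    have h2 : HasDerivAt (fun t : ℝ => t * ⟪g, d⟫) ⟪g, d⟫ t := by
      simpa using (hasDerivAt_id t).mul_const ⟪g, d⟫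
    have h3 : HasDerivAt (fun t : ℝ => L / 2 * t ^ 2 * ‖d‖ ^ 2) (L * t * ‖d‖ ^ 2) t := by
      have := ((hasDerivAt_pow 2 t).const_mul (L / 2)).mul_const (‖d‖ ^ 2)
      refine this.congr_deriv ?_
      push_cast
      ring
    exact ((hcomp t).sub h2).sub h3
  have hmono : φ 1 ≤ φ 0 := by
    have hanti : AntitoneOn φ (Set.Icc 0 1) := by
      apply antitoneOn_of_deriv_nonpos (convex_Icc 0 1)
      · exact (fun t _ => (hder t).differentiableAt.continuousAt.continuousWithinAt)
      · intro t _
        exact (hder t).differentiableAt.differentiableWithinAt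
      · intro t ht
        rw [interior_Icc] at ht
        rw [(hder t).deriv]
        have hb : ‖gradient f (x + t • d) - g‖ ≤ L * (t * ‖d‖) := by
          have := hlip (x + t • d) x
          simpa [norm_smul, abs_of_nonneg ht.1.le, mul_assoc] using this
        have hcs : ⟪gradient f (x + t • d) - g, d⟫ ≤ ‖gradient f (x + t • d) - g‖ * ‖d‖ :=
          real_inner_le_norm _ _
        rw [inner_sub_left] at hcs
        have : ‖gradient f (x + t • d) - g‖ * ‖d‖ ≤ L * (t * ‖d‖) * ‖d‖ :=
          mul_le_mul_of_nonneg_right hb (norm_nonneg d)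
        nlinarith [sq_nonneg ‖d‖]
    exact hanti (by simp) (by norm_num) zero_le_one
  have h0 : φ 0 = f x := by simp [hφ]
  have h1 : φ 1 = f (x + d) - ⟪g, d⟫ - L / 2 * ‖d‖ ^ 2 := by simp [hφ]
  rw [h0, h1] at hmono
  linarith

lemma key_scalar (σ s q r : ℝ) (hσ : 0 < σ) (hs : 0 ≤ s) (hq : 0 ≤ q)
    (hr0 : 0 ≤ r) (hr1 : r < 1)
    (master : ∀ t : ℝ, 0 ≤ t → t ≤ 1 →
      (1 - r ^ 2) * (σ / 2) * (t * (1 - t)) * s ≤ q * (1 - (1 - r ^ 2) * t)) :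
    (1 - r) / (1 + r) * (σ / 2) * s ≤ q := by
  have h1r : (0:ℝ) < 1 + r := by linarith
  rcases eq_or_lt_of_le hr0 with hr | hr
  · rcases hr with rfl
    by_contra hcon
    push_neg at hcon
    simp only [sub_zero, add_zero, div_one, one_mul] at hcon
    have hs' : 0 < s := by nlinarith
    set t : ℝ := (q / (σ / 2 * s) + 1) / 2 with ht
    have htlt : q / (σ / 2 * s) < 1 := by
      rw [div_lt_one (by positivity)]; linarith
    have ht0 : 0 ≤ t := by positivity
    have ht1' : t < 1 := by rw [ht]; linarith
    have hqt : q < σ / 2 * s * t := by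
      have : q / (σ / 2 * s) < t := by
        rw [ht]; linarith [div_nonneg hq (by positivity : (0:ℝ) ≤ σ / 2 * s)]
      calc q = q / (σ / 2 * s) * (σ / 2 * s) := by field_simp
        _ < t * (σ / 2 * s) := by
            apply mul_lt_mul_of_pos_right this (by positivity)
        _ = σ / 2 * s * t := by ring
    have h := master t ht0 ht1'.le
    simp only [pow_two, mul_zero, zero_mul, sub_zero, one_mul, mul_one] at h
    nlinarith
  · have ht0 : (0:ℝ) ≤ 1 / (1 + r) := by positivity
    have ht1 : 1 / (1 + r) ≤ 1 := by rw [div_le_one h1r]; linarith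
    have h := master (1 / (1 + r)) ht0 ht1
    have e1 : 1 - (1 - r ^ 2) * (1 / (1 + r)) = r := by field_simp; ring
    have e2 : (1 / (1 + r)) * (1 - 1 / (1 + r)) = r / (1 + r) ^ 2 := by
      rw [eq_div_iff (by positivity), sq]; field_simp; ring
    rw [e1, e2] at h
    rw [div_mul_eq_mul_div, div_mul_eq_mul_div, div_le_iff₀ (by positivity)]
    have h2 : (1 - r ^ 2) * (σ / 2) * (r / (1 + r) ^ 2) * s * (1 + r) ≤ q * r * (1 + r) :=
      mul_le_mul_of_nonneg_right h h1r.le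
    have e3 : (1 - r ^ 2) * (σ / 2) * (r / (1 + r) ^ 2) * s * (1 + r)
        = (1 - r) * (σ / 2) * s * r := by
      field_simp; ring
    rw [e3] at h2
    nlinarith


/-- With ∇f L-Lipschitz, Q σ-strongly convex, m the smallest eigenvalue of H,
γ ∈ (0,1], η ∈ [0,1), if d satisfies Q(d) ≤ (1 − η)Q* and
(1 − γ)·((1 − √η)/(1 + √η))·σ + m ≥ L, then the sufficient decrease condition
F(x) − F(x + d) ≥ −γ·Q(d) ≥ 0 holds. -/
theorem sufficient_decrease_of_H_large {n : ℕ}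
    (f : EuclideanSpace ℝ (Fin n) → ℝ) (ψ : EuclideanSpace ℝ (Fin n) → EReal)
    (H : EuclideanSpace ℝ (Fin n) →L[ℝ] EuclideanSpace ℝ (Fin n))
    (x d : EuclideanSpace ℝ (Fin n)) (L σ m γ η : ℝ)
    (hf : Differentiable ℝ f)
    (hlip : ∀ y z, ‖gradient f y - gradient f z‖ ≤ L * ‖y - z‖)
    (hψconv : ConvexE ψ) (hψproper : ProperPsi ψ) (hψclosed : ClosedPsi ψ)
    (hdom : ψ x ≠ ⊤)
    (hH : SymmCLM H)
    (hσ : 0 < σ) (hsc : StrongConvexE σ (Qm f ψ H x))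
    (hm : IsSmallestEigenvalue H m)
    (hγ0 : 0 < γ) (hγ1 : γ ≤ 1) (hη0 : 0 ≤ η) (hη1 : η < 1)
    (happrox : Qm f ψ H x d ≤ ((1 - η : ℝ) : EReal) * ⨅ e, Qm f ψ H x e)
    (hcond : L ≤ (1 - γ) * ((1 - Real.sqrt η) / (1 + Real.sqrt η)) * σ + m) :
    ((-γ : ℝ) : EReal) * Qm f ψ H x d ≤ Fm f ψ x - Fm f ψ (x + d) ∧
      (0 : EReal) ≤ ((-γ : ℝ) : EReal) * Qm f ψ H x d := by
  obtain ⟨hψbot, -⟩ := hψproper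
  set g := gradient f x with hg
  set ψx : ℝ := (ψ x).toReal with hψxdef
  have hψxe : ψ x = (ψx : EReal) := (EReal.coe_toReal hdom (hψbot x)).symm
  set s : ℝ := ‖d‖ ^ 2 with hsdef
  have hs : 0 ≤ s := by positivity
  -- Q 0 = 0
  have hQ0 : Qm f ψ H x 0 = 0 := by
    simp only [Qm, hψxe, add_zero, map_zero, inner_zero_right, inner_zero_left]
    norm_num
  have hQstar_le : (⨅ e, Qm f ψ H x e) ≤ 0 := hQ0 ▸ iInf_le _ 0
  -- Q never ⊥
  have hQe_ne_bot : ∀ e, Qm f ψ H x e ≠ ⊥ := by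
    intro e
    simp only [Qm, hψxe]
    rcases eq_top_or_lt_top (ψ (x + e)) with htop | hlt
    · rw [htop, EReal.coe_add_top, EReal.top_sub_coe]
      simp
    · lift ψ (x + e) to ℝ using ⟨hlt.ne, hψbot _⟩ with p
      rw [← EReal.coe_add, ← EReal.coe_sub]
      exact EReal.coe_ne_bot _
  -- Qstar real
  have hQsne : (⨅ e, Qm f ψ H x e) ≠ ⊥ := by
    intro hbot
    rw [hbot, EReal.coe_mul_bot_of_pos (by linarith : (0:ℝ) < 1 - η)] at happrox
    exact hQe_ne_bot d (le_bot_iff.mp happrox)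
  have hQsnt : (⨅ e, Qm f ψ H x e) ≠ ⊤ :=
    (lt_of_le_of_lt hQstar_le EReal.zero_lt_top).ne
  set B : ℝ := (⨅ e, Qm f ψ H x e).toReal with hBdef
  have hBe : (⨅ e, Qm f ψ H x e) = (B : EReal) := (EReal.coe_toReal hQsnt hQsne).symm
  have hB0 : B ≤ 0 := by
    rw [hBe] at hQstar_le
    exact_mod_cast hQstar_le
  -- Q d real
  have happrox' : Qm f ψ H x d ≤ (((1 - η) * B : ℝ) : EReal) := by
    rw [EReal.coe_mul]; rw [hBe] at happrox; exact happrox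
  have hQdnt : Qm f ψ H x d ≠ ⊤ := by
    intro h
    rw [h] at happrox'
    exact absurd happrox' (not_le.mpr (EReal.coe_lt_top _))
  set A : ℝ := (Qm f ψ H x d).toReal with hAdef
  have hAe : Qm f ψ H x d = (A : EReal) := (EReal.coe_toReal hQdnt (hQe_ne_bot d)).symm
  have hAB : A ≤ (1 - η) * B := by
    rw [hAe] at happrox'
    exact_mod_cast happrox'
  -- ψ (x+d) real
  have hpnt : ψ (x + d) ≠ ⊤ := by
    intro h
    apply hQdnt
    simp only [Qm, h, hψxe, EReal.coe_add_top, EReal.top_sub_coe]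
  set p : ℝ := (ψ (x + d)).toReal with hpdef
  have hpe : ψ (x + d) = (p : EReal) := (EReal.coe_toReal hpnt (hψbot _)).symm
  have hAval : A = ⟪g, d⟫ + 1 / 2 * ⟪H d, d⟫ + p - ψx := by
    have := hAe
    rw [Qm, hψxe, hpe, ← EReal.coe_add, ← EReal.coe_sub] at this
    exact_mod_cast this.symm
  -- master inequality
  have master : ∀ t : ℝ, 0 ≤ t → t ≤ 1 → B ≤ t * A - σ / 2 * (t * (1 - t)) * s := by
    intro t ht ht1
    have hc := hsc d 0 t (1 - t) ht (by linarith) (by ring)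
    simp only [smul_zero, add_zero] at hc
    have hrhs : (t : EReal) * (Qm f ψ H x d - ((σ / 2 * ‖d‖ ^ 2 : ℝ) : EReal))
        + ((1 - t : ℝ) : EReal) * (Qm f ψ H x 0 - ((σ / 2 * ‖(0 : EuclideanSpace ℝ (Fin n))‖ ^ 2 : ℝ) : EReal))
        = ((t * (A - σ / 2 * s) : ℝ) : EReal) := by
      rw [hQ0, hAe, hsdef]
      have hz : ((σ / 2 * ‖(0 : EuclideanSpace ℝ (Fin n))‖ ^ 2 : ℝ) : EReal) = ((0:ℝ) : EReal) := by
        norm_num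
      rw [hz, EReal.coe_zero, sub_zero, mul_zero, add_zero, ← EReal.coe_sub, ← EReal.coe_mul]
    rw [hrhs] at hc
    have hle : ((B - σ / 2 * ‖t • d‖ ^ 2 : ℝ) : EReal) ≤ ((t * (A - σ / 2 * s) : ℝ) : EReal) := by
      rw [EReal.coe_sub]
      refine le_trans (EReal.sub_le_sub ?_ le_rfl) hc
      rw [← hBe]
      exact iInf_le _ (t • d)
    have hreal : B - σ / 2 * ‖t • d‖ ^ 2 ≤ t * (A - σ / 2 * s) := by exact_mod_cast hle
    have hn : ‖t • d‖ ^ 2 = t ^ 2 * s := by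
      rw [norm_smul, mul_pow, hsdef]
      congr 1
      rw [Real.norm_eq_abs, sq_abs]
    rw [hn] at hreal
    nlinarith
  -- q := -A bounds
  have hq : 0 ≤ -A := by nlinarith
  set r : ℝ := Real.sqrt η with hrdef
  have hr0 : 0 ≤ r := Real.sqrt_nonneg _
  have hrsq : r ^ 2 = η := Real.sq_sqrt hη0
  have hr1 : r < 1 := by nlinarith
  have master2 : ∀ t : ℝ, 0 ≤ t → t ≤ 1 →
      (1 - r ^ 2) * (σ / 2) * (t * (1 - t)) * s ≤ (-A) * (1 - (1 - r ^ 2) * t) := by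
    intro t ht ht1
    rw [hrsq]
    have h1 := mul_le_mul_of_nonneg_left (master t ht ht1) (by linarith : (0:ℝ) ≤ 1 - η)
    nlinarith
  have hkey : (1 - r) / (1 + r) * (σ / 2) * s ≤ -A :=
    key_scalar σ s (-A) r hσ hs hq hr0 hr1 master2
  -- smallest eigenvalue bound
  have hHm : m * s ≤ ⟪H d, d⟫ := by
    rcases eq_or_ne d 0 with rfl | hd
    · simp [hsdef]
    · have hu : ‖(‖d‖⁻¹ : ℝ) • d‖ = 1 := norm_smul_inv_norm hd
      have hmem := hm.2 ⟨(‖d‖⁻¹ : ℝ) • d, hu, rfl⟩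
      have hdpos : (0:ℝ) < ‖d‖ := norm_pos_iff.mpr hd
      have hinner : ⟪H ((‖d‖⁻¹ : ℝ) • d), (‖d‖⁻¹ : ℝ) • d⟫ = ‖d‖⁻¹ ^ 2 * ⟪H d, d⟫ := by
        rw [map_smul, real_inner_smul_left, real_inner_smul_right]
        ring
      rw [hinner] at hmem
      have := mul_le_mul_of_nonneg_right hmem (by positivity : (0:ℝ) ≤ ‖d‖ ^ 2)
      calc m * s = m * ‖d‖ ^ 2 := by rw [hsdef]
        _ ≤ ‖d‖⁻¹ ^ 2 * ⟪H d, d⟫ * ‖d‖ ^ 2 := this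
        _ = ⟪H d, d⟫ := by field_simp
  -- descent
  have hdesc := descent f L hf hlip x d
  rw [← hg, ← hsdef] at hdesc
  -- final
  have hFx : Fm f ψ x = ((f x + ψx : ℝ) : EReal) := by
    rw [Fm, hψxe, EReal.coe_add]
  have hFxd : Fm f ψ (x + d) = ((f (x + d) + p : ℝ) : EReal) := by
    rw [Fm, hpe, EReal.coe_add]
  clear_value A B p ψx s
  have hc' : L - m ≤ (1 - γ) * ((1 - r) / (1 + r)) * σ := by linarith
  constructor
  · rw [hFx, hFxd, hAe, ← EReal.coe_mul, ← EReal.coe_sub, EReal.coe_le_coe_iff]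
    have hA1 := mul_le_mul_of_nonneg_left hkey (by linarith : (0:ℝ) ≤ 1 - γ)
    have hA2 := mul_le_mul_of_nonneg_right hc' (by positivity : (0:ℝ) ≤ s / 2)
    have e3 : (1 - γ) * ((1 - r) / (1 + r)) * σ * (s / 2)
        = (1 - γ) * ((1 - r) / (1 + r) * (σ / 2) * s) := by ring
    rw [e3] at hA2
    linarith [hA1, hA2, hHm, hdesc]
  · rw [hAe, ← EReal.coe_mul]
    have h5 : (0:ℝ) ≤ -γ * A := by
      rw [neg_mul, ← mul_neg]
      exact mul_nonneg hγ0.le hq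
    exact_mod_cast h5
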